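/- arXiv:2307.12939 — 5 statements merged into one kernel-verified Lean document; each statement's English description precedes it below -/
import Mathlib

section
/- Let φ : S¹ → S¹ be a continuous involution with no fixed points. Then φ is monotone, i.e. any lift φ̂ : ℝ → ℝ of φ (through the covering ℝ → ℝ/ℤ = S¹) is a strictly monotone (increasing) map; equivalently φ is orientation-preserving. -/
/-- A continuous involution of the circle ℝ/ℤ without fixed points is monotone:
any continuous lift `φ̂ : ℝ → ℝ` of `φ` through the covering ℝ → ℝ/ℤ is
strictly increasing. -/
theorem continuous_involution_no_fixed_points_lift_strictMono
    (φ : AddCircle (1:ℝ) → AddCircle (1:ℝ))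
    (hcont : Continuous φ)
    (hinv : ∀ x, φ (φ x) = x)
    (hnofix : ∀ x, φ x ≠ x)
    (φhat : ℝ → ℝ)
    (hφhat : Continuous φhat)
    (hlift : ∀ x : ℝ, ((φhat x : ℝ) : AddCircle (1:ℝ)) = φ ((x : ℝ) : AddCircle (1:ℝ))) :
    StrictMono φhat := by
  have coe_int : ∀ a b : ℝ, ((a:ℝ) : AddCircle (1:ℝ)) = b ↔ ∃ n : ℤ, a - b = n := by
    intro a b
    rw [show ((a:ℝ) : AddCircle (1:ℝ)) = b ↔ ((a - b : ℝ) : AddCircle (1:ℝ)) = 0 from by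
      rw [AddCircle.coe_sub, sub_eq_zero], AddCircle.coe_eq_zero_iff]
    constructor
    · rintro ⟨n, hn⟩; exact ⟨n, by simpa using hn.symm⟩
    · rintro ⟨n, hn⟩; exact ⟨n, by simpa using hn.symm⟩
  have key : ∀ x : ℝ, ∃ n : ℤ, φhat (φhat x) - x = n := by
    intro x
    have h1 := hlift (φhat x)
    rw [hlift x, hinv] at h1
    exact (coe_int _ _).mp h1
  set h : ℝ → ℝ := fun x => φhat (φhat x) - x with hh
  have hchc : Continuous h := (hφhat.comp hφhat).sub continuous_id
  have hconst : ∀ x : ℝ, h x = h 0 := by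
    intro x
    by_contra hne
    obtain ⟨m, hm⟩ := key x
    obtain ⟨n, hn⟩ := key 0
    have hmn : m ≠ n := by
      intro e; apply hne
      show φhat (φhat x) - x = φhat (φhat 0) - 0
      rw [hm, hn, e]
    obtain ⟨j, hj1, hj2, hj3⟩ : ∃ j : ℤ, (j:ℝ) = min (m:ℝ) (n:ℝ) ∧
        (j:ℝ) + 1 ≤ max (m:ℝ) (n:ℝ) ∧ True := by
      refine ⟨min m n, ?_, ?_, trivial⟩
      · exact_mod_cast rfl
      · have h1 : min m n + 1 ≤ max m n := by omega
        exact_mod_cast h1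
    set v : ℝ := (j:ℝ) + 1/2 with hv
    have hjm : (j:ℝ) = min (m:ℝ) (n:ℝ) ∨ True := Or.inr trivial
    have hvmem : v ∈ Set.uIcc (h x) (h 0) := by
      have hhx : h x = (m:ℝ) := hm
      have hh0 : h 0 = (n:ℝ) := by show φhat (φhat 0) - 0 = (n:ℝ); exact hn
      rw [Set.mem_uIcc, hhx, hh0]
      rcases le_total (m:ℝ) (n:ℝ) with hle | hle
      · left
        rw [min_eq_left hle] at hj1
        rw [max_eq_right hle] at hj2
        constructor
        · rw [hv, ← hj1]; linarith
        · rw [hv]; linarith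
      · right
        rw [min_eq_right hle] at hj1
        rw [max_eq_left hle] at hj2
        constructor
        · rw [hv, ← hj1]; linarith
        · rw [hv]; linarith
    obtain ⟨c, _, hc⟩ := intermediate_value_uIcc (hchc.continuousOn (s := Set.uIcc x 0)) hvmem
    obtain ⟨k, hk⟩ := key c
    have heq : (j : ℝ) + 1/2 = (k : ℝ) := by
      rw [← hv, ← hc]; exact hk
    have h2 : ((2 * j + 1 : ℤ) : ℝ) = ((2 * k : ℤ) : ℝ) := by push_cast; linarith
    have h3 : (2 * j + 1 : ℤ) = 2 * k := by exact_mod_cast h2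
    omega
  have hinj : Function.Injective φhat := by
    intro a b hab
    have ha : φhat (φhat a) - a = φhat (φhat 0) - 0 := hconst a
    have hb : φhat (φhat b) - b = φhat (φhat 0) - 0 := hconst b
    rw [hab] at ha
    linarith
  rcases hφhat.strictMono_of_inj hinj with hM | hA
  · exact hM
  · exfalso
    set g : ℝ → ℝ := fun x => φhat x - x with hg
    have hgc : Continuous g := hφhat.sub continuous_id
    have h10 : g 1 < g 0 - 1 := by
      have := hA (zero_lt_one (α := ℝ))
      show φhat 1 - 1 < (φhat 0 - 0) - 1
      linarith
    have hfl : (↑⌊g 0⌋ : ℝ) ∈ Set.uIcc (g 0) (g 1) := by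
      rw [Set.mem_uIcc]
      right
      exact ⟨by linarith [Int.sub_one_lt_floor (g 0)], Int.floor_le _⟩
    obtain ⟨c, _, hc⟩ := intermediate_value_uIcc (hgc.continuousOn (s := Set.uIcc 0 1)) hfl
    have hce : ((φhat c : ℝ) : AddCircle (1:ℝ)) = ((c : ℝ) : AddCircle (1:ℝ)) :=
      (coe_int _ _).mpr ⟨⌊g 0⌋, hc⟩
    exact hnofix ((c : ℝ) : AddCircle (1:ℝ)) (by rw [← hlift c, hce])
end

section
/- Let φ : S¹ → S¹ be a continuous involution with no fixed points. Then there cannot exist a point p ∈ S¹ such that one of the two closed arcs of S¹ determined by {p, φ(p)} contains both q and φ(q) in its interior for some q. (Equivalently: for all q ≠ p with q ≠ φ(p), the points q and φ(q) lie in different open arcs of S¹ \ {p, φ(p)}.) -/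
open Set

/-- For a continuous fixed-point-free involution φ of the circle, for any point p and
any q different from p and φ(p), the points q and φ(q) lie in different connected
components (open arcs) of S¹ \ {p, φ(p)}. -/
theorem involution_separates_arcs
    (φ : AddCircle (1:ℝ) → AddCircle (1:ℝ))
    (hcont : Continuous φ)
    (hinv : ∀ x, φ (φ x) = x)
    (hnofix : ∀ x, φ x ≠ x)
    (p q : AddCircle (1:ℝ))
    (hq1 : q ≠ p) (hq2 : q ≠ φ p) :
    connectedComponentIn ({p, φ p} : Set (AddCircle (1:ℝ)))ᶜ q ≠
      connectedComponentIn ({p, φ p} : Set (AddCircle (1:ℝ)))ᶜ (φ q) := by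
  haveI : Fact ((0:ℝ) < 1) := ⟨one_pos⟩
  intro h
  have hφinj : Function.Injective φ := Function.LeftInverse.injective hinv
  set S : Set (AddCircle (1:ℝ)) := {p, φ p} with hS
  have hqS : q ∈ Sᶜ := by
    simp only [hS, mem_compl_iff, mem_insert_iff, mem_singleton_iff, not_or]
    exact ⟨hq1, hq2⟩
  have hφqS : φ q ∈ Sᶜ := by
    simp only [hS, mem_compl_iff, mem_insert_iff, mem_singleton_iff, not_or]
    constructor
    · intro hc
      exact hq2 (by rw [← hc, hinv])
    · exact fun hc => hq1 (hφinj hc)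
  set C := connectedComponentIn Sᶜ q with hC
  have hqC : q ∈ C := mem_connectedComponentIn hqS
  have hφqC : φ q ∈ C := by
    have := mem_connectedComponentIn hφqS
    rwa [← h] at this
  -- φ maps C into C
  have hCS : C ⊆ Sᶜ := connectedComponentIn_subset _ _
  have himg : φ '' C ⊆ Sᶜ := by
    rintro _ ⟨x, hx, rfl⟩
    have hxS := hCS hx
    simp only [hS, mem_compl_iff, mem_insert_iff, mem_singleton_iff, not_or] at hxS ⊢
    constructor
    · intro hc
      exact hxS.2 (by rw [← hc, hinv])
    · exact fun hc => hxS.1 (hφinj hc)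
  have hφC : φ '' C ⊆ C := by
    have hconn : IsPreconnected (φ '' C) :=
      (isPreconnected_connectedComponentIn).image _ hcont.continuousOn
    have : φ '' C ⊆ connectedComponentIn Sᶜ (φ q) :=
      hconn.subset_connectedComponentIn ⟨q, hqC, rfl⟩ himg
    rwa [← h] at this
  -- chart
  obtain ⟨a, ha⟩ : ∃ a : ℝ, (a : AddCircle (1:ℝ)) = p := Quot.exists_rep p
  set e : AddCircle (1:ℝ) → ℝ := fun x => ((AddCircle.equivIoc 1 a x : Ioc a (a+1)) : ℝ)
    with he
  have heinj : Function.Injective e :=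
    Subtype.val_injective.comp (AddCircle.equivIoc 1 a).injective
  have hecont : ∀ x : AddCircle (1:ℝ), x ≠ p → ContinuousAt e x := by
    intro x hx
    exact continuous_subtype_val.continuousAt.comp
      (AddCircle.continuousAt_equivIoc 1 a (by rwa [ha]))
  have hne : ∀ x ∈ C, x ≠ p := fun x hx hc => by
    have := hCS hx; simp [hS, hc] at this
  have hφne : ∀ x ∈ C, φ x ≠ p := fun x hx => hne _ (hφC ⟨x, hx, rfl⟩)
  set F : AddCircle (1:ℝ) → ℝ := fun x => e (φ x) - e x with hF
  have hFcont : ContinuousOn F C := by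
    intro x hx
    exact (((hecont _ (hφne x hx)).comp hcont.continuousAt).sub
      (hecont _ (hne x hx))).continuousWithinAt
  have hFq : F (φ q) = - F q := by simp [hF, hinv]
  have hFzero : ∀ x ∈ C, F x ≠ 0 := by
    intro x hx hc
    have : e (φ x) = e x := by linarith [sub_eq_zero.mp hc]
    exact hnofix x (heinj this)
  have hconn : IsPreconnected C := isPreconnected_connectedComponentIn
  have : ∃ x ∈ C, F x = 0 := by
    rcases lt_or_gt_of_ne (hFzero q hqC) with hlt | hgt
    · obtain ⟨x, hx, hfx⟩ := hconn.intermediate_value₂ hqC hφqC hFcont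
        continuousOn_const hlt.le (by rw [hFq]; linarith)
      exact ⟨x, hx, hfx⟩
    · obtain ⟨x, hx, hfx⟩ := hconn.intermediate_value₂ hφqC hqC hFcont
        continuousOn_const (by rw [hFq]; linarith) hgt.le
      exact ⟨x, hx, hfx⟩
  obtain ⟨x, hx, hfx⟩ := this
  exact hFzero x hx hfx
end

section
/- Let Γ be a closed curve of length L in a geodesic metric space such that diam(Γ) = L/2. Then there exist two points p, q ∈ Γ dividing Γ into two arcs, each of which is a geodesic (i.e., an isometric embedding / shortest path) of length L/2 joining p and q. -/
/-- Let γ : ℝ → M be an L-periodic arclength-parametrized closed curve in a complete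
geodesic metric space (encoded here by completeness and existence of midpoints), and
assume diam(Γ) = L/2. Then there are two points p = γ(s), q = γ(s + L/2) dividing the
curve into two arcs, each of which is minimising (an isometric / shortest path) of
length L/2. -/
theorem diam_eq_half_length_arcs_minimising
    {M : Type*} [MetricSpace M] [CompleteSpace M]
    (hmid : ∀ x y : M, ∃ z : M, dist x z = dist x y / 2 ∧ dist z y = dist x y / 2)
    (L : ℝ) (hL : 0 < L)
    (γ : ℝ → M)
    (hper : ∀ s, γ (s + L) = γ s)
    (hlip : LipschitzWith 1 γ)
    (hdiam : Metric.diam (Set.range γ) = L / 2) :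
    ∃ s : ℝ, dist (γ s) (γ (s + L / 2)) = L / 2 ∧
      (∀ t u : ℝ, s ≤ t → t ≤ u → u ≤ s + L / 2 → dist (γ t) (γ u) = u - t) ∧
      (∀ t u : ℝ, s + L / 2 ≤ t → t ≤ u → u ≤ s + L → dist (γ t) (γ u) = u - t) := by
  have hperiodic : Function.Periodic γ L := hper
  -- Lipschitz bound on distances
  have hd : ∀ x y : ℝ, dist (γ x) (γ y) ≤ |x - y| := by
    intro x y
    have := hlip.dist_le_mul x y
    simpa [Real.dist_eq] using this
  -- the diameter is attained on the compact set Icc 0 L × Icc 0 L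
  obtain ⟨⟨a, b⟩, hab, hmax⟩ :
      ∃ p ∈ (Set.Icc (0:ℝ) L) ×ˢ (Set.Icc (0:ℝ) L),
        ∀ q ∈ (Set.Icc (0:ℝ) L) ×ˢ (Set.Icc (0:ℝ) L),
          dist (γ q.1) (γ q.2) ≤ dist (γ p.1) (γ p.2) := by
    have hK : IsCompact ((Set.Icc (0:ℝ) L) ×ˢ (Set.Icc (0:ℝ) L)) :=
      (isCompact_Icc).prod isCompact_Icc
    have hne : ((Set.Icc (0:ℝ) L) ×ˢ (Set.Icc (0:ℝ) L)).Nonempty :=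
      ⟨(0, 0), ⟨⟨le_refl _, hL.le⟩, ⟨le_refl _, hL.le⟩⟩⟩
    have hcont : ContinuousOn (fun p : ℝ × ℝ => dist (γ p.1) (γ p.2))
        ((Set.Icc (0:ℝ) L) ×ˢ (Set.Icc (0:ℝ) L)) := by
      apply Continuous.continuousOn
      exact (hlip.continuous.comp continuous_fst).dist
        (hlip.continuous.comp continuous_snd)
    exact hK.exists_isMaxOn hne hcont
  -- the max equals L/2
  have hboundedΓ : Bornology.IsBounded (Set.range γ) := by
    have : Set.range γ = γ '' Set.Icc 0 L := by
      apply Set.Subset.antisymm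
      · rintro _ ⟨x, rfl⟩
        obtain ⟨y, hy, hxy⟩ := hperiodic.exists_mem_Ico₀ hL x
        exact ⟨y, Set.Ico_subset_Icc_self hy, hxy.symm⟩
      · rintro _ ⟨x, _, rfl⟩; exact ⟨x, rfl⟩
    rw [this]
    exact (isCompact_Icc.image hlip.continuous).isBounded
  have hle : dist (γ a) (γ b) ≤ L / 2 := by
    rw [← hdiam]
    exact Metric.dist_le_diam_of_mem hboundedΓ ⟨a, rfl⟩ ⟨b, rfl⟩
  have hge : (L / 2 : ℝ) ≤ dist (γ a) (γ b) := by
    rw [← hdiam]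
    apply Metric.diam_le_of_forall_dist_le (le_trans dist_nonneg (le_of_eq rfl))
    rintro _ ⟨x, rfl⟩ _ ⟨y, rfl⟩
    obtain ⟨x', hx', hxe⟩ := hperiodic.exists_mem_Ico₀ hL x
    obtain ⟨y', hy', hye⟩ := hperiodic.exists_mem_Ico₀ hL y
    rw [hxe, hye]
    exact hmax (x', y') ⟨Set.Ico_subset_Icc_self hx', Set.Ico_subset_Icc_self hy'⟩
  have habd : dist (γ a) (γ b) = L / 2 := le_antisymm hle hge
  -- WLOG a ≤ b
  obtain ⟨a, b, ha, hb, hab', habd⟩ :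
      ∃ a b : ℝ, a ∈ Set.Icc (0:ℝ) L ∧ b ∈ Set.Icc (0:ℝ) L ∧ a ≤ b ∧
        dist (γ a) (γ b) = L / 2 := by
    rcases le_total a b with h | h
    · exact ⟨a, b, hab.1, hab.2, h, habd⟩
    · exact ⟨b, a, hab.2, hab.1, h, by rwa [dist_comm]⟩
  -- b = a + L/2
  have h1 : L / 2 ≤ b - a := by
    have := hd a b
    rw [habd] at this
    rwa [abs_of_nonpos (by linarith), neg_sub] at this
  have h2 : L / 2 ≤ a + L - b := by
    have := hd b (a + L)
    rw [hper a, dist_comm, habd] at this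
    rcases le_total b (a + L) with h | h
    · rwa [abs_of_nonpos (by linarith), neg_sub] at this
    · rw [abs_of_nonneg (by linarith)] at this
      linarith [hb.2, ha.1]
  have hb2 : b = a + L / 2 := by linarith
  subst hb2
  -- conclude
  refine ⟨a, habd, ?_, ?_⟩
  · intro t u ht htu hu
    have d1 : dist (γ a) (γ t) ≤ t - a := by
      have := hd a t
      rwa [abs_of_nonpos (by linarith), neg_sub] at this
    have d2 : dist (γ t) (γ u) ≤ u - t := by
      have := hd t u
      rwa [abs_of_nonpos (by linarith), neg_sub] at this
    have d3 : dist (γ u) (γ (a + L / 2)) ≤ a + L / 2 - u := by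
      have := hd u (a + L / 2)
      rwa [abs_of_nonpos (by linarith), neg_sub] at this
    have tri : dist (γ a) (γ (a + L / 2)) ≤
        dist (γ a) (γ t) + dist (γ t) (γ u) + dist (γ u) (γ (a + L / 2)) :=
      dist_triangle4 _ _ _ _
    rw [habd] at tri
    linarith
  · intro t u ht htu hu
    have hq : dist (γ (a + L / 2)) (γ (a + L)) = L / 2 := by
      rw [hper a, dist_comm, habd]
    have d1 : dist (γ (a + L / 2)) (γ t) ≤ t - (a + L / 2) := by
      have := hd (a + L / 2) t
      rwa [abs_of_nonpos (by linarith), neg_sub] at this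
    have d2 : dist (γ t) (γ u) ≤ u - t := by
      have := hd t u
      rwa [abs_of_nonpos (by linarith), neg_sub] at this
    have d3 : dist (γ u) (γ (a + L)) ≤ a + L - u := by
      have := hd u (a + L)
      rwa [abs_of_nonpos (by linarith), neg_sub] at this
    have tri : dist (γ (a + L / 2)) (γ (a + L)) ≤
        dist (γ (a + L / 2)) (γ t) + dist (γ t) (γ u) + dist (γ u) (γ (a + L)) :=
      dist_triangle4 _ _ _ _
    rw [hq] at tri
    linarith
end

section
/- Let f : [0,a] → ℝ be continuous and θ > 0. Suppose that for every t₀ ∈ [0,a) there exists a function ĥ : [0,ε) → ℝ, differentiable at 0, with ĥ(0) = f(t₀), ĥ(s) ≥ f(t₀ + s) for small s ≥ 0, and ĥ'(0) ≤ −θ (f admits upper support functions with derivative ≤ −θ). Then f(t) ≤ f(0) − θ t for all t ∈ [0,a]. -/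
/-- Support-function comparison: if the continuous function f : [0,a] → ℝ admits at
every t₀ ∈ [0,a) an upper support function differentiable from the right at 0 with
derivative ≤ −θ, then f(t) ≤ f(0) − θ t on [0,a]. -/
theorem support_function_decay
    (a θ : ℝ) (hθ : 0 < θ)
    (f : ℝ → ℝ)
    (hf : ContinuousOn f (Set.Icc 0 a))
    (hsupp : ∀ t₀ ∈ Set.Ico 0 a, ∃ ε > (0:ℝ), ∃ h : ℝ → ℝ, ∃ d : ℝ,
      h 0 = f t₀ ∧
      (∀ s ∈ Set.Ico (0:ℝ) ε, f (t₀ + s) ≤ h s) ∧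
      HasDerivWithinAt h d (Set.Ici 0) 0 ∧
      d ≤ -θ) :
    ∀ t ∈ Set.Icc 0 a, f t ≤ f 0 - θ * t := by
  have main := image_le_of_liminf_slope_right_le_deriv_boundary (f := f) (a := 0) (b := a)
    hf (B := fun x => f 0 - θ * x) (B' := fun _ => -θ) (by simp)
    (by fun_prop)
    (fun x _ => by
      simpa using ((hasDerivWithinAt_id x (Set.Ici x)).const_mul θ).const_sub (f 0))
    ?_
  · intro t ht
    simpa using main ht
  · intro x hx r hr
    obtain ⟨ε, hε, h, d, h0, hle, hder, hdθ⟩ := hsupp x hx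
    have hdr : d < r := lt_of_le_of_lt hdθ hr
    have htend : Filter.Tendsto (slope h 0) (nhdsWithin 0 (Set.Ioi 0)) (nhds d) := by
      have := hasDerivWithinAt_iff_tendsto_slope.mp hder
      rwa [show Set.Ici (0:ℝ) \ {0} = Set.Ioi 0 by
        ext y; simp [Set.mem_diff, le_iff_lt_or_eq, or_comm, eq_comm]] at this
    have hev : ∀ᶠ s in nhdsWithin (0:ℝ) (Set.Ioi 0), slope f x (x + s) < r := by
      have h1 : ∀ᶠ s in nhdsWithin (0:ℝ) (Set.Ioi 0), slope h 0 s < r :=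
        htend.eventually (Filter.Tendsto.eventually_lt_const hdr Filter.tendsto_id)
      have h2 : ∀ᶠ s in nhdsWithin (0:ℝ) (Set.Ioi 0), s < ε :=
        eventually_nhdsWithin_of_eventually_nhds (Filter.Tendsto.eventually_lt_const hε
          Filter.tendsto_id)
      have h3 : ∀ᶠ s in nhdsWithin (0:ℝ) (Set.Ioi 0), s ∈ Set.Ioi (0:ℝ) :=
        eventually_mem_nhdsWithin
      filter_upwards [h1, h2, h3] with s hs1 hs2 hs3
      have hs : (0:ℝ) < s := hs3
      have hfs : f (x + s) ≤ h s := hle s ⟨le_of_lt hs, hs2⟩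
      calc slope f x (x + s) = (f (x + s) - f x) / s := by
            rw [slope_def_field]; ring_nf
          _ ≤ (h s - h 0) / s := by
            gcongr
            · linarith [hfs, h0.ge]
          _ = slope h 0 s := by rw [slope_def_field]; ring_nf
          _ < r := hs1
    -- transfer from s near 0 to z near x via z = x + s
    have hmap : Filter.Tendsto (fun s : ℝ => x + s) (nhdsWithin 0 (Set.Ioi 0))
        (nhdsWithin x (Set.Ioi x)) := by
      apply Filter.Tendsto.inf
      · simpa using (continuous_add_left x).tendsto (0:ℝ)
      · exact Filter.tendsto_principal_principal.mpr fun s hs => by simpa using hs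
    exact Filter.Frequently.filter_mono (Filter.frequently_map.mpr hev.frequently) hmap
end

section
/- Let {p_t, q_t}, t ∈ [0,1], be a sweepout of an embedded circle Γ in a metric space: continuous paths p, q : [0,1] → Γ with p₀ = q₀, p₁ = q₁, and a continuous family of closed arcs C_t ⊆ Γ with ∂C_t = {p_t, q_t}, C₀ a singleton and C₁ = Γ. Then there exists t₀ ∈ [0,1] such that p_{t₀} and q_{t₀} divide Γ into two arcs of equal length; consequently the width S(Γ) = inf over sweepouts of max_t d(p_t,q_t) is strictly positive. -/
/-- Sweepouts of an embedded circle Γ of length L (parametrized by arclength as an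
L-periodic, 1-Lipschitz map γ : ℝ → M, injective on a period). A sweepout is encoded by
continuous parameter functions a, b : [0,1] → ℝ with a 0 = b 0 (the initial singleton
arc), b 1 = a 1 + L (the final arc is all of Γ), with the arc from a t to b t of length
b t − a t ∈ [0, L]. Every sweepout contains a pair dividing Γ into two arcs of equal
length L/2; consequently the width S(Γ), the infimum over sweepouts of the maximal
distance between the pair of points, is strictly positive. -/
theorem sweepout_half_dividing_and_width_pos
    {M : Type*} [MetricSpace M] (L : ℝ) (hL : 0 < L)
    (γ : ℝ → M)
    (hper : ∀ s, γ (s + L) = γ s)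
    (hlip : LipschitzWith 1 γ)
    (hinj : ∀ s ∈ Set.Ico (0:ℝ) L, ∀ t ∈ Set.Ico (0:ℝ) L, γ s = γ t → s = t) :
    (∀ a b : ℝ → ℝ, ContinuousOn a (Set.Icc 0 1) → ContinuousOn b (Set.Icc 0 1) →
      a 0 = b 0 → b 1 = a 1 + L →
      (∀ t ∈ Set.Icc (0:ℝ) 1, a t ≤ b t ∧ b t - a t ≤ L) →
      ∃ t₀ ∈ Set.Icc (0:ℝ) 1, b t₀ - a t₀ = L / 2) ∧
    0 < sInf {m : ℝ | ∃ a b : ℝ → ℝ,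
      ContinuousOn a (Set.Icc 0 1) ∧ ContinuousOn b (Set.Icc 0 1) ∧
      a 0 = b 0 ∧ b 1 = a 1 + L ∧
      (∀ t ∈ Set.Icc (0:ℝ) 1, a t ≤ b t ∧ b t - a t ≤ L) ∧
      m = sSup {d : ℝ | ∃ t ∈ Set.Icc (0:ℝ) 1, d = dist (γ (a t)) (γ (b t))}} := by
  have hp : Function.Periodic γ L := hper
  -- Part 1: intermediate value theorem
  have part1 : ∀ a b : ℝ → ℝ, ContinuousOn a (Set.Icc 0 1) → ContinuousOn b (Set.Icc 0 1) →
      a 0 = b 0 → b 1 = a 1 + L →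
      (∀ t ∈ Set.Icc (0:ℝ) 1, a t ≤ b t ∧ b t - a t ≤ L) →
      ∃ t₀ ∈ Set.Icc (0:ℝ) 1, b t₀ - a t₀ = L / 2 := by
    intro a b ha hb h0 h1 _
    have hc : ContinuousOn (fun t => b t - a t) (Set.Icc 0 1) := hb.sub ha
    have hmem : L / 2 ∈ Set.Icc ((fun t => b t - a t) 0) ((fun t => b t - a t) 1) := by
      simp only [Set.mem_Icc]
      constructor <;> simp [h0, h1] <;> linarith
    obtain ⟨t₀, ht₀, heq⟩ := intermediate_value_Icc (by norm_num : (0:ℝ) ≤ 1) hc hmem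
    exact ⟨t₀, ht₀, heq⟩
  refine ⟨part1, ?_⟩
  -- the gap function
  set g : ℝ → ℝ := fun s => dist (γ s) (γ (s + L / 2)) with hg
  have hgc : Continuous g :=
    hlip.continuous.dist (hlip.continuous.comp (continuous_id.add continuous_const))
  -- positivity of g
  have hgpos : ∀ s, 0 < g s := by
    intro s
    rw [hg]
    simp only
    rw [dist_pos]
    intro hEq
    set s' := s - ⌊s / L⌋ * L with hs'
    have hs'0 : 0 ≤ s' := Int.sub_floor_div_mul_nonneg s hL
    have hs'L : s' < L := Int.sub_floor_div_mul_lt s hL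
    have h1 : γ s = γ s' := (hp.sub_int_mul_eq ⌊s / L⌋).symm
    have h2 : γ (s + L / 2) = γ (s' + L / 2) := by
      have : s + L / 2 - ⌊s / L⌋ * L = s' + L / 2 := by rw [hs']; ring
      calc γ (s + L / 2) = γ (s + L / 2 - ⌊s / L⌋ * L) := (hp.sub_int_mul_eq ⌊s / L⌋).symm
        _ = γ (s' + L / 2) := by rw [this]
    clear_value s'
    rcases lt_or_ge (s' + L / 2) L with hlt | hge
    · have := hinj s' ⟨hs'0, hs'L⟩ (s' + L / 2) ⟨by linarith, hlt⟩
        (by rw [← h1, ← h2, hEq])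
      linarith
    · have h3 : γ (s' + L / 2) = γ (s' + L / 2 - L) := by
        rw [← hper (s' + L / 2 - L)]; ring_nf
      have := hinj s' ⟨hs'0, hs'L⟩ (s' + L / 2 - L) ⟨by linarith, by linarith⟩
        (by rw [← h1, ← h3, ← h2, hEq])
      linarith
  -- uniform positive lower bound
  obtain ⟨x₀, hx₀, hmin⟩ := (isCompact_Icc : IsCompact (Set.Icc (0:ℝ) L)).exists_isMinOn
    ⟨0, by constructor <;> linarith⟩ hgc.continuousOn
  set c := g x₀ with hc
  have hcpos : 0 < c := hgpos x₀
  have hclb : ∀ s, c ≤ g s := by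
    intro s
    set s' := s - ⌊s / L⌋ * L with hs'
    have hs'0 : 0 ≤ s' := Int.sub_floor_div_mul_nonneg s hL
    have hs'L : s' < L := Int.sub_floor_div_mul_lt s hL
    have : g s = g s' := by
      rw [hg]
      simp only
      have h1 : γ s = γ s' := (hp.sub_int_mul_eq ⌊s / L⌋).symm
      have h2 : γ (s + L / 2) = γ (s' + L / 2) := by
        have he : s + L / 2 - ⌊s / L⌋ * L = s' + L / 2 := by rw [hs']; ring
        calc γ (s + L / 2) = γ (s + L / 2 - ⌊s / L⌋ * L) := (hp.sub_int_mul_eq ⌊s / L⌋).symm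
          _ = γ (s' + L / 2) := by rw [he]
      rw [h1, h2]
    rw [this]
    exact isMinOn_iff.mp hmin s' ⟨hs'0, hs'L.le⟩
  -- positivity of the infimum
  have hne : {m : ℝ | ∃ a b : ℝ → ℝ,
      ContinuousOn a (Set.Icc 0 1) ∧ ContinuousOn b (Set.Icc 0 1) ∧
      a 0 = b 0 ∧ b 1 = a 1 + L ∧
      (∀ t ∈ Set.Icc (0:ℝ) 1, a t ≤ b t ∧ b t - a t ≤ L) ∧
      m = sSup {d : ℝ | ∃ t ∈ Set.Icc (0:ℝ) 1, d = dist (γ (a t)) (γ (b t))}}.Nonempty := by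
    refine ⟨_, (fun _ => 0), (fun t => t * L), continuousOn_const,
      (continuous_id.mul continuous_const).continuousOn, by norm_num, by norm_num, ?_, rfl⟩
    intro t ht
    rcases ht with ⟨ht0, ht1⟩
    simp only
    constructor
    · positivity
    · nlinarith
  refine lt_of_lt_of_le hcpos (le_csInf hne ?_)
  rintro m ⟨a, b, ha, hb, h0, h1, hab, rfl⟩
  obtain ⟨t₀, ht₀, heq⟩ := part1 a b ha hb h0 h1 hab
  have hbd : BddAbove {d : ℝ | ∃ t ∈ Set.Icc (0:ℝ) 1, d = dist (γ (a t)) (γ (b t))} := by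
    refine ⟨L, ?_⟩
    rintro d ⟨t, ht, rfl⟩
    have := hlip.dist_le_mul (a t) (b t)
    simp only [NNReal.coe_one, one_mul, Real.dist_eq] at this
    have h := hab t ht
    calc dist (γ (a t)) (γ (b t)) ≤ |a t - b t| := this
      _ = b t - a t := by rw [abs_sub_comm, abs_of_nonneg (by linarith [h.1])]
      _ ≤ L := h.2
  have hmem : dist (γ (a t₀)) (γ (b t₀)) ∈
      {d : ℝ | ∃ t ∈ Set.Icc (0:ℝ) 1, d = dist (γ (a t)) (γ (b t))} := ⟨t₀, ht₀, rfl⟩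
  have : c ≤ dist (γ (a t₀)) (γ (b t₀)) := by
    have hb' : b t₀ = a t₀ + L / 2 := by linarith
    rw [hb']
    exact hclb (a t₀)
  exact this.trans (le_csSup hbd hmem)
end
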